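/- Let A be an n×n matrix with entries in {0,1} (n ≥ 1) such that: (i) any two rows of A are either identical or have disjoint supports (i.e., for all i,k, either A_{ij} = A_{kj} for all j, or there is no j with A_{ij} = A_{kj} = 1); (ii) any two columns of A are either identical or have disjoint supports; and (iii) there is d ≥ 1 such that every row sum and every column sum of A equals d. Then A supports a unitary matrix: there exists a unitary matrix U : Matrix (Fin n) (Fin n) ℂ such that for all i, j, U i j ≠ 0 if and only if A_{ij} = 1. (These hypotheses hold for the adjacency matrix of any Cayley digraph that is a line digraph, by the Richards characterization of line digraphs together with strong connectivity and regularity.) -/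

import Mathlib

open Finset Complex

set_option linter.unusedSectionVars false

namespace Stmt2Aux

variable {α : Type*} [LinearOrder α] [DecidableEq α]

/-- rank of `x` inside the finset `s` -/
def rk (s : Finset α) (x : α) : ℕ := (s.filter (· < x)).card

lemma rk_lt_card {s : Finset α} {x : α} (hx : x ∈ s) : rk s x < s.card := by
  apply Finset.card_lt_card
  refine (Finset.ssubset_iff_of_subset (Finset.filter_subset _ _)).mpr ⟨x, hx, ?_⟩
  simp [Finset.mem_filter]

lemma rk_lt_rk {s : Finset α} {x y : α} (hx : x ∈ s) (hxy : x < y) :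
    rk s x < rk s y := by
  apply Finset.card_lt_card
  refine (Finset.ssubset_iff_of_subset ?_).mpr ⟨x, by simp [Finset.mem_filter, hx, hxy], by simp⟩
  intro z hz
  simp only [Finset.mem_filter] at *
  exact ⟨hz.1, hz.2.trans hxy⟩

lemma rk_injOn {s : Finset α} {x y : α} (hx : x ∈ s) (hy : y ∈ s)
    (h : rk s x = rk s y) : x = y := by
  rcases lt_trichotomy x y with hlt | he | hlt
  · exact absurd h (rk_lt_rk hx hlt).ne
  · exact he
  · exact absurd h.symm (rk_lt_rk hy hlt).ne

lemma sum_rk {M : Type*} [AddCommMonoid M] (s : Finset α) (f : ℕ → M) :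
    ∑ x ∈ s, f (rk s x) = ∑ t ∈ Finset.range s.card, f t := by
  have hinj : Set.InjOn (rk s) s := fun x hx y hy h => rk_injOn hx hy h
  have himg : s.image (rk s) = Finset.range s.card := by
    apply Finset.eq_of_subset_of_card_le
    · intro t ht
      simp only [Finset.mem_image] at ht
      obtain ⟨x, hx, rfl⟩ := ht
      exact Finset.mem_range.mpr (rk_lt_card hx)
    · rw [Finset.card_range, Finset.card_image_of_injOn hinj]
  rw [← himg, Finset.sum_image (fun x hx y hy h => hinj hx hy h)]

end Stmt2Aux

open Stmt2Aux

theorem stmt_2 (n : ℕ) (hn : 1 ≤ n) (A : Matrix (Fin n) (Fin n) ℕ)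
    (h01 : ∀ i j, A i j = 0 ∨ A i j = 1)
    (hrows : ∀ i k : Fin n, (∀ j, A i j = A k j) ∨ ¬ ∃ j, A i j = 1 ∧ A k j = 1)
    (hcols : ∀ j l : Fin n, (∀ i, A i j = A i l) ∨ ¬ ∃ i, A i j = 1 ∧ A i l = 1)
    (hreg : ∃ d : ℕ, 1 ≤ d ∧ (∀ i, ∑ j, A i j = d) ∧ (∀ j, ∑ i, A i j = d)) :
    ∃ U : Matrix (Fin n) (Fin n) ℂ, U ∈ Matrix.unitaryGroup (Fin n) ℂ ∧
      ∀ i j, U i j ≠ 0 ↔ A i j = 1 := by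
  classical
  obtain ⟨d, hd1, hrow, hcol⟩ := hreg
  have hd0 : (d : ℕ) ≠ 0 := by omega
  -- supports
  set S : Fin n → Finset (Fin n) := fun i => Finset.univ.filter (fun j => A i j = 1) with hS
  set T : Fin n → Finset (Fin n) := fun j => Finset.univ.filter (fun i => A i j = 1) with hT
  have hScard : ∀ i, (S i).card = d := by
    intro i
    rw [hS]
    rw [Finset.card_filter]
    rw [← hrow i]
    refine Finset.sum_congr rfl fun j _ => ?_
    rcases h01 i j with h | h <;> simp [h]
  have hTcard : ∀ j, (T j).card = d := by
    intro j
    rw [hT, Finset.card_filter, ← hcol j]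
    refine Finset.sum_congr rfl fun i _ => ?_
    rcases h01 i j with h | h <;> simp [h]
  -- row classes and column classes
  set R : Fin n → Finset (Fin n) := fun i => Finset.univ.filter (fun k => ∀ j, A k j = A i j)
    with hR
  set C : Fin n → Finset (Fin n) := fun j => Finset.univ.filter (fun l => ∀ i, A i l = A i j)
    with hC
  -- for j in the support of row i, the column class of j equals S i
  have hCS : ∀ i j, A i j = 1 → C j = S i := by
    intro i j hij
    ext l
    simp only [hC, hS, Finset.mem_filter, Finset.mem_univ, true_and]
    constructor
    · intro h; rw [h i]; exact hij
    · intro h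
      intro i'
      rcases hcols j l with he | hdisj
      · exact (he i').symm
      · exact absurd ⟨i, hij, h⟩ hdisj
  -- for j in the support of row i, the row class of i equals T j
  have hRT : ∀ i j, A i j = 1 → R i = T j := by
    intro i j hij
    ext k
    simp only [hR, hT, Finset.mem_filter, Finset.mem_univ, true_and]
    constructor
    · intro h; rw [h j]; exact hij
    · intro h
      intro j'
      rcases hrows i k with he | hdisj
      · exact (he j').symm
      · exact absurd ⟨j, hij, h⟩ hdisj
  have hSne : ∀ i, ∃ j, A i j = 1 := by
    intro i
    have : (S i).Nonempty := Finset.card_pos.mp (by rw [hScard i]; omega)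
    obtain ⟨j, hj⟩ := this
    exact ⟨j, (Finset.mem_filter.mp hj).2⟩
  have hRcard : ∀ i, (R i).card = d := by
    intro i
    obtain ⟨j, hj⟩ := hSne i
    rw [hRT i j hj, hTcard]
  -- rank functions
  set r : Fin n → ℕ := fun i => rk (R i) i with hrdef
  set c : Fin n → ℕ := fun j => rk (C j) j with hcdef
  have hmemR : ∀ i, i ∈ R i := fun i => by simp [hR]
  have hmemC : ∀ j, j ∈ C j := fun j => by simp [hC]
  have hrlt : ∀ i, r i < d := fun i => by
    rw [hrdef, ← hRcard i]; exact rk_lt_card (hmemR i)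
  -- the root of unity
  set ζ : ℂ := Complex.exp (2 * Real.pi * Complex.I / d) with hζ
  have hprim : IsPrimitiveRoot ζ d := Complex.isPrimitiveRoot_exp d hd0
  have hζ0 : ζ ≠ 0 := Complex.exp_ne_zero _
  have hζabs : ‖ζ‖ = 1 := by
    rw [hζ, Complex.norm_exp]
    norm_num [Complex.div_re, Complex.normSq]
  have hconj : (starRingEnd ℂ) ζ = ζ⁻¹ := (Complex.inv_eq_conj hζabs).symm
  have hsqrt : (Real.sqrt d : ℂ) ≠ 0 := by
    norm_cast
    positivity
  set U : Matrix (Fin n) (Fin n) ℂ := fun i j =>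
    if A i j = 1 then ζ ^ (r i * c j) / (Real.sqrt d : ℂ) else 0 with hU
  refine ⟨U, ?_, ?_⟩
  · rw [Matrix.mem_unitaryGroup_iff]
    ext i k
    rw [Matrix.mul_apply, Matrix.one_apply]
    have hterm : ∀ j, U i j * (star U) j k = U i j * (starRingEnd ℂ) (U k j) := by
      intro j
      rfl
    simp only [Matrix.star_apply, Matrix.conjTranspose_apply, RCLike.star_def]
    rcases hrows i k with he | hdisj
    · -- identical rows
      have hRik : R i = R k := by
        ext x; simp only [hR, Finset.mem_filter]
        constructor <;> intro ⟨h1, h2⟩ <;> exact ⟨h1, fun j => by rw [h2 j, he j]⟩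
      -- restrict the sum to S i
      have hrw : ∀ j, U i j * (starRingEnd ℂ) (U k j)
          = if A i j = 1 then (ζ ^ ((r i : ℤ) - r k)) ^ (c j) / d else 0 := by
        intro j
        by_cases hj : A i j = 1
        · have hkj : A k j = 1 := by rw [← he j]; exact hj
          simp only [hU, hj, hkj, if_true]
          rw [map_div₀, map_pow, hconj]
          have hcs : (starRingEnd ℂ) (Real.sqrt d : ℂ) = (Real.sqrt d : ℂ) := by
            rw [Complex.conj_ofReal]
          rw [hcs]
          rw [div_mul_div_comm]
          have hss : (Real.sqrt d : ℂ) * (Real.sqrt d : ℂ) = (d : ℂ) := by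
            rw [← Complex.ofReal_mul, Real.mul_self_sqrt (by positivity : (0:ℝ) ≤ (d:ℝ))]
            norm_num
          rw [hss]
          congr 1
          rw [inv_pow, ← zpow_natCast ζ (r i * c j), ← zpow_natCast ζ (r k * c j),
            ← zpow_neg, ← zpow_add₀ hζ0, ← zpow_natCast (ζ ^ ((r i : ℤ) - r k)) (c j),
            ← zpow_mul]
          congr 1
          push_cast
          ring
        · have hkj : ¬ A k j = 1 := by rw [← he j]; exact hj
          simp [hU, hj, hkj]
      rw [Finset.sum_congr rfl (fun j _ => hrw j)]
      rw [Finset.sum_ite, Finset.sum_const_zero, add_zero]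
      have hfilter : Finset.univ.filter (fun j => A i j = 1) = S i := rfl
      rw [hfilter]
      -- replace c j by rank in S i
      have hcrank : ∀ j ∈ S i, c j = rk (S i) j := by
        intro j hj
        have hj1 : A i j = 1 := (Finset.mem_filter.mp hj).2
        rw [hcdef]
        simp only
        rw [hCS i j hj1]
      rw [Finset.sum_congr rfl (fun j hj => by rw [hcrank j hj])]
      rw [← Finset.sum_div, sum_rk (S i) (fun t => (ζ ^ ((r i : ℤ) - r k)) ^ t), hScard i]
      by_cases hik : i = k
      · subst hik
        simp only [sub_self, zpow_zero, one_pow, Finset.sum_const, Finset.card_range,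
          nsmul_eq_mul, mul_one, if_true]
        exact div_self (by exact_mod_cast hd0)
      · rw [if_neg hik]
        have hrik : r i ≠ r k := by
          intro h
          apply hik
          have hkR : k ∈ R i := by
            simp only [hR, Finset.mem_filter, Finset.mem_univ, true_and]
            intro j; exact (he j).symm
          have h' : rk (R i) i = rk (R k) k := h
          rw [← hRik] at h'
          exact rk_injOn (hmemR i) hkR h'
        have hm0 : (r i : ℤ) - r k ≠ 0 := by
          intro h
          apply hrik
          omega
        have hne1 : ζ ^ ((r i : ℤ) - r k) ≠ 1 := by
          intro h
          rw [hprim.zpow_eq_one_iff_dvd] at h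
          apply hm0
          refine Int.eq_zero_of_dvd_of_natAbs_lt_natAbs h ?_
          have h1 := hrlt i
          have h2 := hrlt k
          simp only [Int.natAbs_natCast]
          omega
        rw [geom_sum_eq hne1, ← zpow_natCast (ζ ^ ((r i : ℤ) - r k)) d, ← zpow_mul,
          mul_comm, zpow_mul, zpow_natCast ζ d, hprim.pow_eq_one, one_zpow, sub_self,
          zero_div, zero_div]
    · -- disjoint rows
      have hik : i ≠ k := by
        rintro rfl
        obtain ⟨j, hj⟩ := hSne i
        exact hdisj ⟨j, hj, hj⟩
      rw [if_neg hik]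
      apply Finset.sum_eq_zero
      intro j _
      by_cases hj : A i j = 1
      · have hkj : ¬ A k j = 1 := fun h => hdisj ⟨j, hj, h⟩
        simp [hU, hkj]
      · simp [hU, hj]
  · intro i j
    by_cases hj : A i j = 1
    · simp only [hU, hj, if_true, iff_true]
      exact div_ne_zero (pow_ne_zero _ hζ0) hsqrt
    · simp [hU, hj]
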